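/- Let f be an L(1,2)-edge labeling of T8, let S be a unit square, and let e1, e2 ∈ G_S be edges sharing an endpoint with f(e1) = c and f(e2) = c + 1, such that e1 and e2 are NOT at angle 45°. Then there exist four pairwise distinct unit squares S1, S2, S3, S4, each distinct from S and each with all vertices in S', such that no edge in G_{S1} and no edge in G_{S2} has label c under f, and no edge in G_{S3} and no edge in G_{S4} has label c + 1 under f. -/

import Mathlib

/-- The infinite octagonal grid (king graph on `ℤ × ℤ`): distinct vertices are
adjacent iff their Chebyshev distance is `1`. -/
def T8 : SimpleGraph (ℤ × ℤ) where
  Adj u v := u ≠ v ∧ max |u.1 - v.1| |u.2 - v.2| = 1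
  symm := by
    constructor
    rintro u v ⟨h1, h2⟩
    refine ⟨h1.symm, ?_⟩
    rw [abs_sub_comm v.1 u.1, abs_sub_comm v.2 u.2]
    exact h2
  loopless := by constructor; rintro u ⟨h, -⟩; exact h rfl

/-- Two (unordered pairs regarded as) edges share an endpoint. -/
def SharesEndpoint (e1 e2 : Sym2 (ℤ × ℤ)) : Prop := ∃ v, v ∈ e1 ∧ v ∈ e2

/-- Two edges of `T8` are at distance `1`: distinct and sharing an endpoint. -/
def EdgeDist1 (e1 e2 : Sym2 (ℤ × ℤ)) : Prop := e1 ≠ e2 ∧ SharesEndpoint e1 e2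

/-- Two edges of `T8` are at distance `2`: distinct, sharing no endpoint, but some
edge of `T8` shares an endpoint with both. -/
def EdgeDist2 (e1 e2 : Sym2 (ℤ × ℤ)) : Prop :=
  e1 ≠ e2 ∧ ¬ SharesEndpoint e1 e2 ∧
    ∃ e3 ∈ T8.edgeSet, SharesEndpoint e1 e3 ∧ SharesEndpoint e3 e2

/-- `f` is an `L(1,2)`-edge labeling of `T8`: edges at distance `1` get distinct
labels and edges at distance `2` get labels differing by at least `2`. -/
def IsL12 (f : Sym2 (ℤ × ℤ) → ℕ) : Prop :=
  (∀ e1 ∈ T8.edgeSet, ∀ e2 ∈ T8.edgeSet, EdgeDist1 e1 e2 → f e1 ≠ f e2) ∧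
  (∀ e1 ∈ T8.edgeSet, ∀ e2 ∈ T8.edgeSet, EdgeDist2 e1 e2 → 2 ≤ |(f e1 : ℤ) - (f e2 : ℤ)|)

/-- An `L(1,2)`-edge labeling of `T8` with labels in `{0, …, n}`. -/
def IsL12Bounded (n : ℕ) (f : Sym2 (ℤ × ℤ) → ℕ) : Prop :=
  IsL12 f ∧ ∀ e ∈ T8.edgeSet, f e ≤ n

/-- The unit square `S(a,b)`. -/
def unitSquare (a b : ℤ) : Set (ℤ × ℤ) :=
  {(a, b), (a + 1, b), (a, b + 1), (a + 1, b + 1)}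

/-- `GS S`: the set of edges of `T8` incident to at least one vertex of `S`. -/
def GS (S : Set (ℤ × ℤ)) : Set (Sym2 (ℤ × ℤ)) :=
  {e | e ∈ T8.edgeSet ∧ ∃ v ∈ S, v ∈ e}

/-- `Sprime a b`: vertices at Chebyshev distance at most `2` from some vertex of
`S(a,b)` (that is, `S ∪ N(S) ∪ N(N(S))`). -/
def Sprime (a b : ℤ) : Set (ℤ × ℤ) :=
  {u | ∃ v ∈ unitSquare a b, max |u.1 - v.1| |u.2 - v.2| ≤ 2}

/-- Two edges sharing an endpoint `v`, written `e1 = {v, v+d1}` and `e2 = {v, v+d2}`,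
are at angle `45°` if exactly one of `d1, d2` has both coordinates nonzero and
`d1 · d2 = 1`. -/
def Angle45 (e1 e2 : Sym2 (ℤ × ℤ)) : Prop :=
  ∃ v d1 d2 : ℤ × ℤ, e1 = s(v, v + d1) ∧ e2 = s(v, v + d2) ∧
    Xor' (d1.1 ≠ 0 ∧ d1.2 ≠ 0) (d2.1 ≠ 0 ∧ d2.2 ≠ 0) ∧
    d1.1 * d2.1 + d1.2 * d2.2 = 1

/-- An edge is slanting if its endpoints differ in both coordinates. -/
def Slanting (e : Sym2 (ℤ × ℤ)) : Prop :=
  ∃ u v : ℤ × ℤ, e = s(u, v) ∧ u.1 ≠ v.1 ∧ u.2 ≠ v.2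

/-- `e, e', e''` form the edge set of a triangle of `T8`. -/
def TriangleEdgeSet (e e' e'' : Sym2 (ℤ × ℤ)) : Prop :=
  ∃ u v w : ℤ × ℤ, T8.Adj u v ∧ T8.Adj v w ∧ T8.Adj u w ∧
    ({e, e', e''} : Set (Sym2 (ℤ × ℤ))) = {s(u, v), s(v, w), s(u, w)}

/-- A triangle of `T8`: three pairwise adjacent vertices. -/
def IsTriangle (t : Finset (ℤ × ℤ)) : Prop :=
  t.card = 3 ∧ ∀ u ∈ t, ∀ v ∈ t, u ≠ v → T8.Adj u v

/-- The edges of a triangle. -/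
def triangleEdges (t : Finset (ℤ × ℤ)) : Set (Sym2 (ℤ × ℤ)) :=
  {e | ∃ u ∈ t, ∃ v ∈ t, u ≠ v ∧ e = s(u, v)}


def chebLe1 (p q : ℤ × ℤ) : Prop :=
  p.1 - q.1 ≤ 1 ∧ q.1 - p.1 ≤ 1 ∧ p.2 - q.2 ≤ 1 ∧ q.2 - p.2 ≤ 1

def nearE (w z x y : ℤ × ℤ) : Prop :=
  chebLe1 w x ∨ chebLe1 w y ∨ chebLe1 z x ∨ chebLe1 z y

def pairNe (w z x y : ℤ × ℤ) : Prop := ¬((w = x ∧ z = y) ∨ (w = y ∧ z = x))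
def noShare (w z x y : ℤ × ℤ) : Prop := w ≠ x ∧ w ≠ y ∧ z ≠ x ∧ z ≠ y
def condC (w z v0 u1 u2 : ℤ × ℤ) : Prop :=
  (pairNe w z v0 u1 ∧ nearE w z v0 u1) ∨ (noShare w z v0 u2 ∧ nearE w z v0 u2)

lemma t8_adj {u v : ℤ × ℤ} : T8.Adj u v ↔
    ¬(u.1 = v.1 ∧ u.2 = v.2) ∧ u.1 - v.1 ≤ 1 ∧ v.1 - u.1 ≤ 1 ∧ u.2 - v.2 ≤ 1 ∧ v.2 - u.2 ≤ 1 := by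
  constructor
  · rintro ⟨hne, hmax⟩
    have h1 : |u.1 - v.1| ≤ 1 := hmax ▸ le_max_left _ _
    have h2 : |u.2 - v.2| ≤ 1 := hmax ▸ le_max_right _ _
    rw [abs_le] at h1 h2
    exact ⟨fun h => hne (Prod.ext_iff.mpr h), by omega⟩
  · rintro ⟨hne, h⟩
    refine ⟨fun h' => hne (Prod.ext_iff.mp h'), ?_⟩
    rcases max_cases |u.1 - v.1| |u.2 - v.2| with ⟨he, hge⟩ | ⟨he, hge⟩ <;> rw [he] <;>
      rcases abs_cases (u.1 - v.1) with ⟨e1, _⟩ | ⟨e1, _⟩ <;>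
      rcases abs_cases (u.2 - v.2) with ⟨e2, _⟩ | ⟨e2, _⟩ <;> omega

lemma edge_swap {x y v : ℤ × ℤ} (h : T8.Adj x y) (hv : v = x ∨ v = y) :
    ∃ u, s(x, y) = s(v, u) ∧ T8.Adj v u ∧ (u = x ∨ u = y) := by
  rcases hv with rfl | rfl
  · exact ⟨y, rfl, h, Or.inr rfl⟩
  · exact ⟨x, Sym2.eq_swap, h.symm, Or.inl rfl⟩

lemma labelDist2 (f : Sym2 (ℤ × ℤ) → ℕ) (hf : IsL12 f) {x y x' y' w ww : ℤ × ℤ}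
    (h : T8.Adj x y) (h' : T8.Adj x' y') (hw : w = x ∨ w = y) (hww : ww = x' ∨ ww = y')
    (hns : ¬ SharesEndpoint s(x, y) s(x', y')) (hc : chebLe1 w ww) :
    2 ≤ |(f s(x, y) : ℤ) - (f s(x', y') : ℤ)| := by
  have hwmem : w ∈ s(x, y) := by rcases hw with rfl | rfl <;> simp
  have hwwmem : ww ∈ s(x', y') := by rcases hww with rfl | rfl <;> simp
  have hne0 : w ≠ ww := fun hh => hns ⟨w, hwmem, hh ▸ hwwmem⟩
  have hadj3 : T8.Adj w ww := by
    rw [t8_adj]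
    obtain ⟨c1, c2, c3, c4⟩ := hc
    exact ⟨fun hh => hne0 (Prod.ext_iff.mpr hh), c1, c2, c3, c4⟩
  have hne : s(x, y) ≠ s(x', y') := fun hh => hns ⟨w, hwmem, hh ▸ hwmem⟩
  refine hf.2 _ ((T8.mem_edgeSet).mpr h) _ ((T8.mem_edgeSet).mpr h')
    ⟨hne, hns, s(w, ww), (T8.mem_edgeSet).mpr hadj3, ⟨w, hwmem, by simp⟩,
      ⟨ww, by simp, hwwmem⟩⟩

lemma labelB (f : Sym2 (ℤ × ℤ) → ℕ) (hf : IsL12 f) {x y x' y' : ℤ × ℤ}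
    (h : T8.Adj x y) (h' : T8.Adj x' y')
    (hns : ¬ SharesEndpoint s(x, y) s(x', y')) (hnear : nearE x y x' y') :
    2 ≤ |(f s(x, y) : ℤ) - (f s(x', y') : ℤ)| := by
  rcases hnear with hc | hc | hc | hc
  · exact labelDist2 f hf h h' (Or.inl rfl) (Or.inl rfl) hns hc
  · exact labelDist2 f hf h h' (Or.inl rfl) (Or.inr rfl) hns hc
  · exact labelDist2 f hf h h' (Or.inr rfl) (Or.inl rfl) hns hc
  · exact labelDist2 f hf h h' (Or.inr rfl) (Or.inr rfl) hns hc

lemma labelA (f : Sym2 (ℤ × ℤ) → ℕ) (hf : IsL12 f) {x y x' y' : ℤ × ℤ}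
    (h : T8.Adj x y) (h' : T8.Adj x' y') (hne : s(x, y) ≠ s(x', y'))
    (hnear : nearE x y x' y') : f s(x, y) ≠ f s(x', y') := by
  by_cases hs : SharesEndpoint s(x, y) s(x', y')
  · exact hf.1 _ ((T8.mem_edgeSet).mpr h) _ ((T8.mem_edgeSet).mpr h') ⟨hne, hs⟩
  · have := labelB f hf h h' hs hnear
    intro hh
    rw [hh] at this
    simp at this

lemma avoidGen (f : Sym2 (ℤ × ℤ) → ℕ) (hf : IsL12 f) {v0 u1 u2 w z : ℤ × ℤ}
    (h1 : T8.Adj v0 u1) (h2 : T8.Adj v0 u2) (hwz : T8.Adj w z)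
    (hcond : condC w z v0 u1 u2) {m m' : ℕ} (hm : f s(v0, u1) = m)
    (hm' : f s(v0, u2) = m') (hd1 : (m : ℤ) - m' ≤ 1) (hd2 : (m' : ℤ) - m ≤ 1) :
    f s(w, z) ≠ m := by
  rcases hcond with ⟨hne, hnear⟩ | ⟨hns, hnear⟩
  · have hne' : s(w, z) ≠ s(v0, u1) := fun hh => hne (Sym2.eq_iff.mp hh)
    have := labelA f hf hwz h1 hne' hnear
    rw [hm] at this; exact this
  · have hns' : ¬ SharesEndpoint s(w, z) s(v0, u2) := by
      rintro ⟨t, ht1, ht2⟩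
      rw [Sym2.mem_iff] at ht1 ht2
      obtain ⟨n1, n2, n3, n4⟩ := hns
      rcases ht1 with rfl | rfl <;> rcases ht2 with rfl | rfl <;> simp_all
    have h2d := labelB f hf hwz h2 hns' hnear
    rw [hm'] at h2d
    intro hh
    rw [hh] at h2d
    rcases abs_cases ((m : ℤ) - (m' : ℤ)) with ⟨e1, _⟩ | ⟨e1, _⟩ <;> omega

def corners : Finset (ℤ × ℤ) := {(0,0),(1,0),(0,1),(1,1)}
def D8s : Finset (ℤ × ℤ) := {(-1,-1),(-1,0),(-1,1),(0,-1),(0,1),(1,-1),(1,0),(1,1)}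
def sqC (p v0 u1 u2 : ℤ × ℤ) : Prop :=
  ∀ i ∈ corners, ∀ d ∈ D8s, condC (p + i) (p + i + d) v0 u1 u2

lemma chebLe1_shift (t : ℤ × ℤ) {w x : ℤ × ℤ} : chebLe1 (w + t) (x + t) ↔ chebLe1 w x := by
  obtain ⟨w1, w2⟩ := w; obtain ⟨x1, x2⟩ := x; obtain ⟨t1, t2⟩ := t
  simp only [chebLe1, Prod.mk_add_mk]
  constructor <;> intro h <;> omega

lemma condC_shift (t : ℤ × ℤ) {w z v0 u1 u2 : ℤ × ℤ} (h : condC w z v0 u1 u2) :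
    condC (w + t) (z + t) (v0 + t) (u1 + t) (u2 + t) := by
  simp only [condC, pairNe, noShare, nearE, add_left_inj, chebLe1_shift, ne_eq] at h ⊢
  exact h

lemma square_avoid (f : Sym2 (ℤ × ℤ) → ℕ) (hf : IsL12 f) (a b : ℤ) {v0 u1 u2 : ℤ × ℤ}
    {m m' : ℕ} (hadj1 : T8.Adj v0 u1) (hadj2 : T8.Adj v0 u2)
    (hm : f s(v0, u1) = m) (hm' : f s(v0, u2) = m')
    (hd1 : (m : ℤ) - m' ≤ 1) (hd2 : (m' : ℤ) - m ≤ 1) (q : ℤ × ℤ)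
    (hsq : sqC q (v0.1 - a, v0.2 - b) (u1.1 - a, u1.2 - b) (u2.1 - a, u2.2 - b)) :
    ∀ e ∈ GS (unitSquare (a + q.1) (b + q.2)), f e ≠ m := by
  rintro e ⟨heE, w0, hw0S, hw0e⟩
  obtain ⟨x, y, rfl⟩ : ∃ x y, e = s(x, y) := Sym2.ind (fun x y => ⟨x, y, rfl⟩) e
  rw [SimpleGraph.mem_edgeSet] at heE
  rw [Sym2.mem_iff] at hw0e
  obtain ⟨z, heq, hadjwz, -⟩ := edge_swap heE hw0e
  rw [heq]
  have hi : ((w0.1 - a - q.1, w0.2 - b - q.2) : ℤ × ℤ) ∈ corners := by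
    simp only [unitSquare, Set.mem_insert_iff, Set.mem_singleton_iff, Prod.ext_iff] at hw0S
    simp only [corners, Finset.mem_insert, Finset.mem_singleton, Prod.mk.injEq]
    omega
  have hd : ((z.1 - w0.1, z.2 - w0.2) : ℤ × ℤ) ∈ D8s := by
    obtain ⟨hne, h1, h2, h3, h4⟩ := t8_adj.mp hadjwz
    simp only [D8s, Finset.mem_insert, Finset.mem_singleton, Prod.mk.injEq]
    omega
  have hcond := hsq _ hi _ hd
  have hcond' := condC_shift (a, b) hcond
  have e1 : q + (w0.1 - a - q.1, w0.2 - b - q.2) + (a, b) = w0 := by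
    rw [Prod.ext_iff]; constructor <;> simp <;> try ring
  have e2 : q + (w0.1 - a - q.1, w0.2 - b - q.2) + (z.1 - w0.1, z.2 - w0.2) + (a, b) = z := by
    rw [Prod.ext_iff]; constructor <;> simp <;> try ring
  have e3 : ((v0.1 - a, v0.2 - b) : ℤ × ℤ) + (a, b) = v0 := by
    rw [Prod.ext_iff]; constructor <;> simp
  have e4 : ((u1.1 - a, u1.2 - b) : ℤ × ℤ) + (a, b) = u1 := by
    rw [Prod.ext_iff]; constructor <;> simp
  have e5 : ((u2.1 - a, u2.2 - b) : ℤ × ℤ) + (a, b) = u2 := by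
    rw [Prod.ext_iff]; constructor <;> simp
  rw [e1, e2, e3, e4, e5] at hcond'
  exact avoidGen f hf hadj1 hadj2 hadjwz hcond' hm hm' hd1 hd2

lemma sub_sprime (a b s t : ℤ) (hs1 : -2 ≤ s) (hs2 : s ≤ 2) (ht1 : -2 ≤ t) (ht2 : t ≤ 2) :
    unitSquare (a + s) (b + t) ⊆ Sprime a b := by
  intro u hu
  simp only [unitSquare, Set.mem_insert_iff, Set.mem_singleton_iff] at hu
  refine ⟨(a + (if 1 ≤ s then 1 else 0), b + (if 1 ≤ t then 1 else 0)), ?_, ?_⟩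
  · simp only [unitSquare, Set.mem_insert_iff, Set.mem_singleton_iff, Prod.mk.injEq]
    split_ifs <;> simp
  · apply max_le <;> rw [abs_le] <;>
      rcases hu with rfl | rfl | rfl | rfl <;> simp <;> split_ifs <;> omega

lemma shiftNe (a b : ℤ) {q q' : ℤ × ℤ} (h : q ≠ q') :
    ((a + q.1, b + q.2) : ℤ × ℤ) ≠ (a + q'.1, b + q'.2) := by
  intro hh; apply h
  rw [Prod.ext_iff] at hh ⊢
  simp at hh ⊢; omega

lemma shiftNe0 (a b : ℤ) {q : ℤ × ℤ} (h : q ≠ (0, 0)) :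
    ((a + q.1, b + q.2) : ℤ × ℤ) ≠ (a, b) := by
  intro hh; apply h
  rw [Prod.ext_iff] at hh ⊢
  simp at hh ⊢; omega


instance (p q : Prop) [Decidable p] [Decidable q] : Decidable (Xor' p q) := by
  unfold Xor'; infer_instance

instance (w z : ℤ × ℤ) : Decidable (chebLe1 w z) := by unfold chebLe1; infer_instance
instance (w z x y : ℤ × ℤ) : Decidable (nearE w z x y) := by unfold nearE; infer_instance
instance (w z x y : ℤ × ℤ) : Decidable (pairNe w z x y) := by unfold pairNe; infer_instance
instance (w z x y : ℤ × ℤ) : Decidable (noShare w z x y) := by unfold noShare; infer_instance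
instance (w z x y u : ℤ × ℤ) : Decidable (condC w z x y u) := by unfold condC; infer_instance

def P24 : Finset (ℤ × ℤ) := {(-1,1),(1,-1),(1,1),(-1,-1),(-2,0),(0,1),(0,-2),(1,0),(0,2),(0,-1),(-1,0),(2,0),(-2,-1),(-2,1),(-1,-2),(1,-2),(-1,2),(1,2),(2,-1),(2,1),(-2,-2),(-2,2),(2,-2),(2,2)}

instance (p v0 u1 u2 : ℤ × ℤ) : Decidable (sqC p v0 u1 u2) := by unfold sqC; infer_instance

def coreConcl (v u1 u2 : ℤ × ℤ) : Prop :=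
  ∃ p1 ∈ P24, sqC p1 v u1 u2 ∧ ∃ p2 ∈ P24, p2 ≠ p1 ∧ sqC p2 v u1 u2 ∧
  ∃ p3 ∈ P24, p3 ≠ p1 ∧ p3 ≠ p2 ∧ sqC p3 v u2 u1 ∧
  ∃ p4 ∈ P24, p4 ≠ p1 ∧ p4 ≠ p2 ∧ p4 ≠ p3 ∧ sqC p4 v u2 u1

instance (v u1 u2 : ℤ × ℤ) : Decidable (coreConcl v u1 u2) := by unfold coreConcl; infer_instance

def coreAt (v : ℤ × ℤ) : Prop :=
  ∀ d1 ∈ D8s, ∀ d2 ∈ D8s,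
    (v ∈ corners ∨ v + d1 ∈ corners) → (v ∈ corners ∨ v + d2 ∈ corners) →
    d1 ≠ d2 →
    ¬(Xor' (d1.1 ≠ 0 ∧ d1.2 ≠ 0) (d2.1 ≠ 0 ∧ d2.2 ≠ 0) ∧ d1.1 * d2.1 + d1.2 * d2.2 = 1) →
    coreConcl v (v + d1) (v + d2)

set_option synthInstance.maxHeartbeats 2000000 in
set_option synthInstance.maxSize 4096 in
instance (v : ℤ × ℤ) : Decidable (coreAt v) := by unfold coreAt; infer_instance

set_option maxRecDepth 40000 in
lemma core_m1_m1 : coreAt (-1,-1) := by decide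

set_option maxRecDepth 40000 in
lemma core_m1_0 : coreAt (-1,0) := by decide

set_option maxRecDepth 40000 in
lemma core_m1_1 : coreAt (-1,1) := by decide

set_option maxRecDepth 40000 in
lemma core_m1_2 : coreAt (-1,2) := by decide

set_option maxRecDepth 40000 in
lemma core_0_m1 : coreAt (0,-1) := by decide

set_option maxRecDepth 40000 in
lemma core_0_0 : coreAt (0,0) := by decide

set_option maxRecDepth 40000 in
lemma core_0_1 : coreAt (0,1) := by decide

set_option maxRecDepth 40000 in
lemma core_0_2 : coreAt (0,2) := by decide

set_option maxRecDepth 40000 in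
lemma core_1_m1 : coreAt (1,-1) := by decide

set_option maxRecDepth 40000 in
lemma core_1_0 : coreAt (1,0) := by decide

set_option maxRecDepth 40000 in
lemma core_1_1 : coreAt (1,1) := by decide

set_option maxRecDepth 40000 in
lemma core_1_2 : coreAt (1,2) := by decide

set_option maxRecDepth 40000 in
lemma core_2_m1 : coreAt (2,-1) := by decide

set_option maxRecDepth 40000 in
lemma core_2_0 : coreAt (2,0) := by decide

set_option maxRecDepth 40000 in
lemma core_2_1 : coreAt (2,1) := by decide

set_option maxRecDepth 40000 in
lemma core_2_2 : coreAt (2,2) := by decide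

lemma coreAll (s t : ℤ) (h1 : -1 ≤ s) (h2 : s ≤ 2) (h3 : -1 ≤ t) (h4 : t ≤ 2) :
    coreAt (s, t) := by
  interval_cases s <;> interval_cases t <;> first | exact core_m1_m1 | exact core_m1_0 | exact core_m1_1 | exact core_m1_2 | exact core_0_m1 | exact core_0_0 | exact core_0_1 | exact core_0_2 | exact core_1_m1 | exact core_1_0 | exact core_1_1 | exact core_1_2 | exact core_2_m1 | exact core_2_0 | exact core_2_1 | exact core_2_2


lemma range_case (a b v1 v2 w1 w2 : ℤ)
    (hb1 : v1 - w1 ≤ 1) (hb2 : w1 - v1 ≤ 1) (hb3 : v2 - w2 ≤ 1) (hb4 : w2 - v2 ≤ 1)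
    (hx : ((v1 = a ∧ v2 = b) ∨ (v1 = a + 1 ∧ v2 = b) ∨ (v1 = a ∧ v2 = b + 1) ∨
        (v1 = a + 1 ∧ v2 = b + 1)) ∨
      ((w1 = a ∧ w2 = b) ∨ (w1 = a + 1 ∧ w2 = b) ∨ (w1 = a ∧ w2 = b + 1) ∨
        (w1 = a + 1 ∧ w2 = b + 1))) :
    -1 ≤ v1 - a ∧ v1 - a ≤ 2 ∧ -1 ≤ v2 - b ∧ v2 - b ≤ 2 := by omega

lemma corners_case1 (a b v1 v2 : ℤ)
    (h : (v1 = a ∧ v2 = b) ∨ (v1 = a + 1 ∧ v2 = b) ∨ (v1 = a ∧ v2 = b + 1) ∨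
        (v1 = a + 1 ∧ v2 = b + 1)) :
    ((v1 - a, v2 - b) : ℤ × ℤ) ∈ corners := by
  simp only [corners, Finset.mem_insert, Finset.mem_singleton, Prod.mk.injEq]
  omega

lemma corners_case2 (a b v1 v2 w1 w2 : ℤ)
    (h : (w1 = a ∧ w2 = b) ∨ (w1 = a + 1 ∧ w2 = b) ∨ (w1 = a ∧ w2 = b + 1) ∨
        (w1 = a + 1 ∧ w2 = b + 1)) :
    ((v1 - a, v2 - b) : ℤ × ℤ) + (w1 - v1, w2 - v2) ∈ corners := by
  simp only [corners, Finset.mem_insert, Finset.mem_singleton, Prod.mk_add_mk, Prod.mk.injEq]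
  omega

lemma D8_case (v1 v2 w1 w2 : ℤ) (hne : ¬(v1 = w1 ∧ v2 = w2))
    (hb1 : v1 - w1 ≤ 1) (hb2 : w1 - v1 ≤ 1) (hb3 : v2 - w2 ≤ 1) (hb4 : w2 - v2 ≤ 1) :
    ((w1 - v1, w2 - v2) : ℤ × ℤ) ∈ D8s := by
  simp only [D8s, Finset.mem_insert, Finset.mem_singleton, Prod.mk.injEq]
  omega

lemma Dne_case {u1 u2 v0 : ℤ × ℤ} (h : u1 ≠ u2) :
    ((u1.1 - v0.1, u1.2 - v0.2) : ℤ × ℤ) ≠ (u2.1 - v0.1, u2.2 - v0.2) := by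
  intro hh
  simp only [Prod.mk.injEq] at hh
  exact h (Prod.ext_iff.mpr ⟨by omega, by omega⟩)

lemma cast_le1 (c : ℕ) : ((c : ℤ) - ((c + 1 : ℕ) : ℤ) ≤ 1) ∧ (((c + 1 : ℕ) : ℤ) - (c : ℤ) ≤ 1) := by
  push_cast; omega

set_option maxHeartbeats 1600000 in
/-- If two edges of `G_S` sharing an endpoint, not at angle `45°`,
get consecutive labels `c` and `c+1`, then there are four pairwise distinct unit
squares (all distinct from `S`, with all vertices in `S'`) such that `c` is not
used on `G_{S1}`, `G_{S2}` and `c+1` is not used on `G_{S3}`, `G_{S4}`. -/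
theorem consecutive_not45_four_squares (f : Sym2 (ℤ × ℤ) → ℕ) (hf : IsL12 f)
    (a b : ℤ) (c : ℕ) (e1 e2 : Sym2 (ℤ × ℤ))
    (he1 : e1 ∈ GS (unitSquare a b)) (he2 : e2 ∈ GS (unitSquare a b))
    (hshare : SharesEndpoint e1 e2)
    (hf1 : f e1 = c) (hf2 : f e2 = c + 1) (hang : ¬ Angle45 e1 e2) :
    ∃ p1 p2 p3 p4 : ℤ × ℤ,
      ([p1, p2, p3, p4, (a, b)] : List (ℤ × ℤ)).Pairwise (· ≠ ·) ∧
      (∀ p ∈ ([p1, p2, p3, p4] : List (ℤ × ℤ)), unitSquare p.1 p.2 ⊆ Sprime a b) ∧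
      (∀ e ∈ GS (unitSquare p1.1 p1.2), f e ≠ c) ∧
      (∀ e ∈ GS (unitSquare p2.1 p2.2), f e ≠ c) ∧
      (∀ e ∈ GS (unitSquare p3.1 p3.2), f e ≠ c + 1) ∧
      (∀ e ∈ GS (unitSquare p4.1 p4.2), f e ≠ c + 1) := by
  obtain ⟨he1E, wS1, hwS1, hwS1e⟩ := he1
  obtain ⟨he2E, wS2, hwS2, hwS2e⟩ := he2
  obtain ⟨v0, hv0e1, hv0e2⟩ := hshare
  obtain ⟨x1, y1, rfl⟩ : ∃ x y, e1 = s(x, y) := Sym2.ind (fun x y => ⟨x, y, rfl⟩) e1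
  obtain ⟨x2, y2, rfl⟩ : ∃ x y, e2 = s(x, y) := Sym2.ind (fun x y => ⟨x, y, rfl⟩) e2
  rw [SimpleGraph.mem_edgeSet] at he1E he2E
  rw [Sym2.mem_iff] at hv0e1 hv0e2 hwS1e hwS2e
  obtain ⟨u1, he1eq, hadj1, hu1m⟩ := edge_swap he1E hv0e1
  obtain ⟨u2, he2eq, hadj2, hu2m⟩ := edge_swap he2E hv0e2
  rw [he1eq] at hf1 hang
  rw [he2eq] at hf2 hang
  have hwS1' : wS1 = v0 ∨ wS1 = u1 := by
    rcases Sym2.eq_iff.mp he1eq with ⟨h, h'⟩ | ⟨h, h'⟩ <;> rcases hwS1e with rfl | rfl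
    exacts [Or.inl h, Or.inr h', Or.inr h, Or.inl h']
  have hwS2' : wS2 = v0 ∨ wS2 = u2 := by
    rcases Sym2.eq_iff.mp he2eq with ⟨h, h'⟩ | ⟨h, h'⟩ <;> rcases hwS2e with rfl | rfl
    exacts [Or.inl h, Or.inr h', Or.inr h, Or.inl h']
  have hne12 : s(v0, u1) ≠ s(v0, u2) := by intro h; rw [h] at hf1; omega
  have hu12 : u1 ≠ u2 := fun h => hne12 (by rw [h])
  obtain ⟨hbe1, hb11, hb12, hb13, hb14⟩ := t8_adj.mp hadj1
  obtain ⟨hbe2, hb21, hb22, hb23, hb24⟩ := t8_adj.mp hadj2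
  simp only [unitSquare, Set.mem_insert_iff, Set.mem_singleton_iff, Prod.ext_iff] at hwS1 hwS2
  have hx1 : ((v0.1 = a ∧ v0.2 = b) ∨ (v0.1 = a + 1 ∧ v0.2 = b) ∨ (v0.1 = a ∧ v0.2 = b + 1) ∨
        (v0.1 = a + 1 ∧ v0.2 = b + 1)) ∨
      ((u1.1 = a ∧ u1.2 = b) ∨ (u1.1 = a + 1 ∧ u1.2 = b) ∨ (u1.1 = a ∧ u1.2 = b + 1) ∨
        (u1.1 = a + 1 ∧ u1.2 = b + 1)) := by
    rcases hwS1' with rfl | rfl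
    exacts [Or.inl hwS1, Or.inr hwS1]
  have hx2 : ((v0.1 = a ∧ v0.2 = b) ∨ (v0.1 = a + 1 ∧ v0.2 = b) ∨ (v0.1 = a ∧ v0.2 = b + 1) ∨
        (v0.1 = a + 1 ∧ v0.2 = b + 1)) ∨
      ((u2.1 = a ∧ u2.2 = b) ∨ (u2.1 = a + 1 ∧ u2.2 = b) ∨ (u2.1 = a ∧ u2.2 = b + 1) ∨
        (u2.1 = a + 1 ∧ u2.2 = b + 1)) := by
    rcases hwS2' with rfl | rfl
    exacts [Or.inl hwS2, Or.inr hwS2]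
  have hrange := range_case a b v0.1 v0.2 u1.1 u1.2 hb11 hb12 hb13 hb14 hx1
  have hcore := coreAll _ _ hrange.1 hrange.2.1 hrange.2.2.1 hrange.2.2.2
  have hD1 := D8_case v0.1 v0.2 u1.1 u1.2 hbe1 hb11 hb12 hb13 hb14
  have hD2 := D8_case v0.1 v0.2 u2.1 u2.2 hbe2 hb21 hb22 hb23 hb24
  have hm1 : ((v0.1 - a, v0.2 - b) : ℤ × ℤ) ∈ corners ∨
      ((v0.1 - a, v0.2 - b) : ℤ × ℤ) + (u1.1 - v0.1, u1.2 - v0.2) ∈ corners := by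
    rcases hx1 with h | h
    exacts [Or.inl (corners_case1 a b v0.1 v0.2 h), Or.inr (corners_case2 a b v0.1 v0.2 u1.1 u1.2 h)]
  have hm2 : ((v0.1 - a, v0.2 - b) : ℤ × ℤ) ∈ corners ∨
      ((v0.1 - a, v0.2 - b) : ℤ × ℤ) + (u2.1 - v0.1, u2.2 - v0.2) ∈ corners := by
    rcases hx2 with h | h
    exacts [Or.inl (corners_case1 a b v0.1 v0.2 h), Or.inr (corners_case2 a b v0.1 v0.2 u2.1 u2.2 h)]
  have hDne := Dne_case (v0 := v0) hu12
  have hv1 : v0 + ((u1.1 - v0.1, u1.2 - v0.2) : ℤ × ℤ) = u1 :=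
    Prod.ext_iff.mpr ⟨by simp, by simp⟩
  have hv2 : v0 + ((u2.1 - v0.1, u2.2 - v0.2) : ℤ × ℤ) = u2 :=
    Prod.ext_iff.mpr ⟨by simp, by simp⟩
  have h45 : ¬(Xor' (u1.1 - v0.1 ≠ 0 ∧ u1.2 - v0.2 ≠ 0) (u2.1 - v0.1 ≠ 0 ∧ u2.2 - v0.2 ≠ 0) ∧
      (u1.1 - v0.1) * (u2.1 - v0.1) + (u1.2 - v0.2) * (u2.2 - v0.2) = 1) := by
    rintro ⟨hx, hdot⟩
    exact hang ⟨v0, (u1.1 - v0.1, u1.2 - v0.2), (u2.1 - v0.1, u2.2 - v0.2),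
      by rw [hv1], by rw [hv2], hx, hdot⟩
  obtain ⟨q1, hq1P, hsq1, q2, hq2P, hq2ne, hsq2, q3, hq3P, hq3ne1, hq3ne2, hsq3,
    q4, hq4P, hq4ne1, hq4ne2, hq4ne3, hsq4⟩ := hcore _ hD1 _ hD2 hm1 hm2 hDne h45
  have hA1 : ((v0.1 - a, v0.2 - b) : ℤ × ℤ) + (u1.1 - v0.1, u1.2 - v0.2) =
      (u1.1 - a, u1.2 - b) := Prod.ext_iff.mpr ⟨by simp; try ring, by simp; try ring⟩
  have hA2 : ((v0.1 - a, v0.2 - b) : ℤ × ℤ) + (u2.1 - v0.1, u2.2 - v0.2) =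
      (u2.1 - a, u2.2 - b) := Prod.ext_iff.mpr ⟨by simp; try ring, by simp; try ring⟩
  rw [hA1, hA2] at hsq1 hsq2 hsq3 hsq4
  have hPb : ∀ q ∈ P24, (-2 ≤ q.1 ∧ q.1 ≤ 2 ∧ -2 ≤ q.2 ∧ q.2 ≤ 2) ∧ q ≠ (0, 0) := by decide
  refine ⟨(a + q1.1, b + q1.2), (a + q2.1, b + q2.2), (a + q3.1, b + q3.2),
    (a + q4.1, b + q4.2), ?_, ?_, ?_, ?_, ?_, ?_⟩
  · refine List.Pairwise.cons ?_ (List.Pairwise.cons ?_ (List.Pairwise.cons ?_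
      (List.Pairwise.cons ?_ (List.Pairwise.cons
        (fun _ h => absurd h List.not_mem_nil) List.Pairwise.nil))))
    · rintro p hp
      simp only [List.mem_cons, List.mem_singleton, List.not_mem_nil, or_false] at hp
      rcases hp with rfl | rfl | rfl | rfl
      exacts [shiftNe a b (Ne.symm hq2ne), shiftNe a b (Ne.symm hq3ne1),
        shiftNe a b (Ne.symm hq4ne1), shiftNe0 a b (hPb q1 hq1P).2]
    · rintro p hp
      simp only [List.mem_cons, List.mem_singleton, List.not_mem_nil, or_false] at hp
      rcases hp with rfl | rfl | rfl
      exacts [shiftNe a b (Ne.symm hq3ne2), shiftNe a b (Ne.symm hq4ne2),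
        shiftNe0 a b (hPb q2 hq2P).2]
    · rintro p hp
      simp only [List.mem_cons, List.mem_singleton, List.not_mem_nil, or_false] at hp
      rcases hp with rfl | rfl
      exacts [shiftNe a b (Ne.symm hq4ne3), shiftNe0 a b (hPb q3 hq3P).2]
    · rintro p hp
      simp only [List.mem_cons, List.mem_singleton, List.not_mem_nil, or_false] at hp
      rcases hp with rfl
      exact shiftNe0 a b (hPb q4 hq4P).2
  · intro p hp
    simp only [List.mem_cons, List.not_mem_nil, or_false] at hp
    rcases hp with rfl | rfl | rfl | rfl
    · exact sub_sprime a b _ _ (hPb q1 hq1P).1.1 (hPb q1 hq1P).1.2.1 (hPb q1 hq1P).1.2.2.1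
        (hPb q1 hq1P).1.2.2.2
    · exact sub_sprime a b _ _ (hPb q2 hq2P).1.1 (hPb q2 hq2P).1.2.1 (hPb q2 hq2P).1.2.2.1
        (hPb q2 hq2P).1.2.2.2
    · exact sub_sprime a b _ _ (hPb q3 hq3P).1.1 (hPb q3 hq3P).1.2.1 (hPb q3 hq3P).1.2.2.1
        (hPb q3 hq3P).1.2.2.2
    · exact sub_sprime a b _ _ (hPb q4 hq4P).1.1 (hPb q4 hq4P).1.2.1 (hPb q4 hq4P).1.2.2.1
        (hPb q4 hq4P).1.2.2.2
  · exact square_avoid f hf a b hadj1 hadj2 hf1 hf2 (cast_le1 c).1 (cast_le1 c).2 q1 hsq1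
  · exact square_avoid f hf a b hadj1 hadj2 hf1 hf2 (cast_le1 c).1 (cast_le1 c).2 q2 hsq2
  · exact square_avoid f hf a b hadj2 hadj1 hf2 hf1 (cast_le1 c).2 (cast_le1 c).1 q3 hsq3
  · exact square_avoid f hf a b hadj2 hadj1 hf2 hf1 (cast_le1 c).2 (cast_le1 c).1 q4 hsq4
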